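/- Let F be the terminal cost function F(r, θ, V) = θ²(√2·√(V²+2a_m r) − V)/a_m + |θ|³/(3ω_m) + √2·(V²+2a_m r)^{3/2}(23V² + 40a_m² + 46a_m r)/(240 a_m³) − (V³/(3a_m) + V r²/a_m + 2V³ r/(3a_m²) + 2V⁵/(15a_m³)). Along the flow ṙ = −V, θ̇ = 0, V̇ = −a_m (the 'decelerate' mode), on the set where V² = 2a_m r with r > 0, V > 0, one has dF/dt = −(r² + θ² + V²). -/

import Mathlib

/-- The NMPC terminal cost in terminal-set coordinates (r, θ, V). -/
noncomputable def terminalCost (a_m ω_m r θ V : ℝ) : ℝ :=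
  θ ^ 2 * ((Real.sqrt 2 * Real.sqrt (V ^ 2 + 2 * a_m * r) - V) / a_m)
    + |θ| ^ 3 / (3 * ω_m)
    + Real.sqrt 2 * (V ^ 2 + 2 * a_m * r) ^ ((3:ℝ)/2)
        * (23 * V ^ 2 + 40 * a_m ^ 2 + 46 * a_m * r) / (240 * a_m ^ 3)
    - (V ^ 3 / (3 * a_m) + V * r ^ 2 / a_m
        + 2 * V ^ 3 * r / (3 * a_m ^ 2)
        + 2 * V ^ 5 / (15 * a_m ^ 3))

lemma hasDerivAt_abs_cube (x : ℝ) :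
    HasDerivAt (fun y : ℝ => |y| ^ 3) (3 * x * |x|) x := by
  have h : ∀ y : ℝ, |y| ^ 3 = (y ^ 2) ^ ((3:ℝ)/2) := by
    intro y
    rw [← sq_abs, ← Real.rpow_natCast (|y|) 2, ← Real.rpow_mul (abs_nonneg y),
      ← Real.rpow_natCast (|y|) 3]
    norm_num
  have hd : HasDerivAt (fun y : ℝ => (y ^ 2) ^ ((3:ℝ)/2))
      ((2 * x ^ 1) * ((3:ℝ)/2) * (x ^ 2) ^ ((3:ℝ)/2 - 1)) x :=
    (hasDerivAt_pow 2 x).rpow_const (Or.inr (by norm_num))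
  have hd2 : HasDerivAt (fun y : ℝ => |y| ^ 3)
      ((2 * x ^ 1) * ((3:ℝ)/2) * (x ^ 2) ^ ((3:ℝ)/2 - 1)) x := by
    simpa only [← h] using hd
  convert hd2 using 1
  have hx2 : (x ^ 2) ^ ((3:ℝ)/2 - 1) = |x| := by
    rw [← sq_abs, show (3:ℝ)/2 - 1 = 1/2 by norm_num, ← Real.sqrt_eq_rpow,
      Real.sqrt_sq (abs_nonneg x)]
  rw [hx2]; ring

/-- Along the 'decelerate' mode ṙ = −V, θ̇ = 0, V̇ = −a_m, on the parabola
    V² = 2a_m r with r > 0, V > 0, one has dF/dt = −(r² + θ² + V²). -/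
theorem terminal_cost_decrease_decelerate
    (a_m ω_m : ℝ) (ha : a_m > 0) (hω : ω_m > 0)
    (r θ V : ℝ → ℝ) (t : ℝ)
    (hrdot : HasDerivAt r (-(V t)) t)
    (hθdot : HasDerivAt θ 0 t)
    (hVdot : HasDerivAt V (-a_m) t)
    (hrpos : r t > 0) (hVpos : V t > 0)
    (hVr : (V t) ^ 2 = 2 * a_m * r t) :
    HasDerivAt (fun s => terminalCost a_m ω_m (r s) (θ s) (V s))
      (-((r t) ^ 2 + (θ t) ^ 2 + (V t) ^ 2)) t := by
  have hune : V t ^ 2 + 2 * a_m * r t ≠ 0 := by positivity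
  have hupos : (0:ℝ) < V t ^ 2 + 2 * a_m * r t := by positivity
  -- u = V^2 + 2 a r
  have hu : HasDerivAt (fun s => V s ^ 2 + 2 * a_m * r s)
      ((2 : ℕ) * V t ^ 1 * (-a_m) + 2 * a_m * (-(V t))) t :=
    (hVdot.pow 2).add (hrdot.const_mul (2 * a_m))
  -- sqrt of u
  have hsqrt := hu.sqrt hune
  -- rpow of u
  have hrpow := hu.rpow_const (p := (3:ℝ)/2) (Or.inl hune)
  -- abs cube of θ
  have habs : HasDerivAt (fun s => |θ s| ^ 3) (3 * θ t * |θ t| * 0) t :=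
    (hasDerivAt_abs_cube (θ t)).comp t hθdot
  -- term 1
  have T1 := (hθdot.pow 2).mul (((hsqrt.const_mul (Real.sqrt 2)).sub hVdot).div_const a_m)
  -- term 2
  have T2 := habs.div_const (3 * ω_m)
  -- term 3
  have hQ : HasDerivAt (fun s => 23 * V s ^ 2 + 40 * a_m ^ 2 + 46 * a_m * r s)
      (23 * ((2:ℕ) * V t ^ 1 * (-a_m)) + 0 + 46 * a_m * (-(V t))) t :=
    ((((hVdot.pow 2).const_mul 23).add (hasDerivAt_const t (40 * a_m ^ 2))).add
      (hrdot.const_mul (46 * a_m)))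
  have T3 := ((hrpow.const_mul (Real.sqrt 2)).mul hQ).div_const (240 * a_m ^ 3)
  -- term 4 pieces
  have T4a := (hVdot.pow 3).div_const (3 * a_m)
  have T4b := (hVdot.mul (hrdot.pow 2)).div_const a_m
  have T4c := (((hVdot.pow 3).const_mul 2).mul hrdot).div_const (3 * a_m ^ 2)
  have T4d := ((hVdot.pow 5).const_mul 2).div_const (15 * a_m ^ 3)
  have total := ((T1.add T2).add T3).sub (((T4a.add T4b).add T4c).add T4d)
  have heq : (fun s => terminalCost a_m ω_m (r s) (θ s) (V s)) =
      (fun s => θ s ^ 2 * ((Real.sqrt 2 * Real.sqrt (V s ^ 2 + 2 * a_m * r s) - V s) / a_m)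
        + |θ s| ^ 3 / (3 * ω_m)
        + Real.sqrt 2 * (V s ^ 2 + 2 * a_m * r s) ^ ((3:ℝ)/2)
            * (23 * V s ^ 2 + 40 * a_m ^ 2 + 46 * a_m * r s) / (240 * a_m ^ 3)
        - (V s ^ 3 / (3 * a_m) + V s * r s ^ 2 / a_m
            + 2 * V s ^ 3 * r s / (3 * a_m ^ 2)
            + 2 * V s ^ 5 / (15 * a_m ^ 3))) := by
    funext s; simp [terminalCost]
  rw [heq]
  convert total using 1
  case e'_4 => rfl
  case e'_5 => rfl
  case e'_8 => rfl
  -- now the algebraic identity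
  have hs2 : Real.sqrt 2 ^ 2 = 2 := Real.sq_sqrt (by norm_num)
  have hsu : Real.sqrt (V t ^ 2 + 2 * a_m * r t) = Real.sqrt 2 * V t := by
    rw [show V t ^ 2 + 2 * a_m * r t = 2 * V t ^ 2 by linarith,
      show (2 : ℝ) * V t ^ 2 = (Real.sqrt 2 * V t) ^ 2 by rw [mul_pow, hs2],
      Real.sqrt_sq (by positivity)]
  have hu12 : (V t ^ 2 + 2 * a_m * r t) ^ ((3:ℝ)/2 - 1) = Real.sqrt 2 * V t := by
    rw [show (3:ℝ)/2 - 1 = 1/2 by norm_num, ← Real.sqrt_eq_rpow, hsu]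
  have hu32 : (V t ^ 2 + 2 * a_m * r t) ^ ((3:ℝ)/2)
      = 2 * Real.sqrt 2 * V t ^ 3 := by
    have : (V t ^ 2 + 2 * a_m * r t) ^ ((3:ℝ)/2)
        = Real.sqrt (V t ^ 2 + 2 * a_m * r t) ^ (3:ℕ) := by
      rw [Real.sqrt_eq_rpow, ← Real.rpow_natCast _ 3, ← Real.rpow_mul hupos.le]
      norm_num
    rw [this, hsu, mul_pow, pow_succ, hs2]
  rw [hsu, hu12, hu32]
  have har : a_m * r t = V t ^ 2 / 2 := by linarith
  field_simp
  simp only [Pi.pow_apply]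
  have hR : r t = V t ^ 2 / (2 * a_m) := by field_simp; linarith
  have h3 : Real.sqrt 2 ^ 3 = 2 * Real.sqrt 2 := by rw [pow_succ, hs2]
  rw [hR]
  field_simp
  ring_nf
  field_simp
  ring_nf
  simp only [hs2, h3]
  ring
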